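/- Let all agents' valuations be binary and linear, and let Φ : ℝ^N → ℝ be symmetric and strictly convex. Then every Φ-fair allocation A of the mixed goods (not necessarily satisfying condition (*)) satisfies the following weaker variant of EFXM: for all agents i,j, if u_i(C_j) = 0 then u_i(A_i) ≥ u_i(A_j) or u_i(A_i) ≥ u_i(A_j \ {g}) for every indivisible good g ∈ A_j; otherwise u_i(A_i) ≥ u_i(A_j). -/

import Mathlib

open MeasureTheory

/-- The interval `I_j = [j/ℓ, (j+1)/ℓ) ⊆ [0,1)` representing the `j`-th of the
`ℓ` divisible goods (so that `I_1, …, I_ℓ` partition the cake `C = [0,1)`). -/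
def dgInterval (l : ℕ) (j : Fin l) : Set ℝ :=
  Set.Ico ((j : ℝ) / l) (((j : ℝ) + 1) / l)

/-- An allocation of `m` indivisible goods and of the cake `[0,1)` among `n` agents:
the indivisible goods are partitioned into the bundles `ind i`, and the cake `[0,1)`
is partitioned into the measurable (Borel) pieces `piece i`. -/
structure Alloc (n m : ℕ) where
  ind : Fin n → Finset (Fin m)
  piece : Fin n → Set ℝ
  ind_partition : ∀ g : Fin m, ∃! i : Fin n, g ∈ ind i
  piece_measurable : ∀ i, MeasurableSet (piece i)
  piece_disjoint : ∀ i j : Fin n, i ≠ j → piece i ∩ piece j = ∅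
  piece_cover : (⋃ i, piece i) = Set.Ico (0 : ℝ) 1

section

variable {n m l : ℕ} (vM : Fin n → Fin m → ℝ) (vC : Fin n → Fin l → ℝ)

/-- Additive value of agent `i` for a set `S` of indivisible goods. -/
def valInd (i : Fin n) (S : Finset (Fin m)) : ℝ := ∑ g ∈ S, vM i g

/-- Linear value of agent `i` for a piece `S` of the cake:
`u_i(S) = ∑_j u_i(c_j) · μ(S ∩ I_j)` where `μ` is the Lebesgue measure. -/
noncomputable def valDiv (i : Fin n) (S : Set ℝ) : ℝ :=
  ∑ j : Fin l, vC i j * (volume (S ∩ dgInterval l j)).toReal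

/-- Value of agent `i` for agent `j`'s bundle `A_j = M_j ∪ C_j` in allocation `A`. -/
noncomputable def valOn (A : Alloc n m) (i j : Fin n) : ℝ :=
  valInd vM i (A.ind j) + valDiv vC i (A.piece j)

/-- Utility of agent `i` in allocation `A`: `u_i(A_i) = u_i(M_i) + u_i(C_i)`. -/
noncomputable def util (A : Alloc n m) (i : Fin n) : ℝ := valOn vM vC A i i

/-- An allocation is utilitarian optimal if it maximizes the total sum of utilities. -/
def UtilOpt (A : Alloc n m) : Prop :=
  ∀ A' : Alloc n m, (∑ i, util vM vC A' i) ≤ ∑ i, util vM vC A i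

/-- An allocation is `Φ`-fair if its utility vector minimizes `Φ` among the utility
vectors of utilitarian optimal allocations. -/
def PhiFair (Φ : (Fin n → ℝ) → ℝ) (A : Alloc n m) : Prop :=
  UtilOpt vM vC A ∧
    ∀ A' : Alloc n m, UtilOpt vM vC A' → Φ (util vM vC A) ≤ Φ (util vM vC A')

/-- Pareto optimality: no allocation gives every agent at least as much utility
and some agent strictly more. -/
def PO (A : Alloc n m) : Prop :=
  ¬ ∃ A' : Alloc n m,
      (∀ i, util vM vC A i ≤ util vM vC A' i) ∧ ∃ i, util vM vC A i < util vM vC A' i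

/-- Envy-freeness up to any good for mixed goods (EFXM): for all agents `i, j`,
if `C_j = ∅` then `u_i(A_i) ≥ u_i(A_j)` or `u_i(A_i) ≥ u_i(A_j \ {g})` for every
indivisible good `g ∈ A_j`; otherwise `u_i(A_i) ≥ u_i(A_j)`. -/
def EFXM (A : Alloc n m) : Prop :=
  ∀ i j : Fin n,
    (A.piece j = ∅ →
      (valOn vM vC A i j ≤ util vM vC A i ∨
        ∀ g ∈ A.ind j,
          valInd vM i (A.ind j \ {g}) + valDiv vC i (A.piece j) ≤ util vM vC A i)) ∧
    (A.piece j ≠ ∅ → valOn vM vC A i j ≤ util vM vC A i)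

end

/-- Condition (*): each agent's piece of each divisible good is either empty or of
positive Lebesgue measure. -/
def CondStar {n m : ℕ} (l : ℕ) (A : Alloc n m) : Prop :=
  ∀ (i : Fin n) (j : Fin l),
    A.piece i ∩ dgInterval l j = ∅ ∨ 0 < volume (A.piece i ∩ dgInterval l j)

namespace WeakEFXMAux

lemma dgInterval_measurableSet (l : ℕ) (k : Fin l) : MeasurableSet (dgInterval l k) :=
  measurableSet_Ico

lemma dgInterval_disjoint {l : ℕ} {k k' : Fin l} (h : k ≠ k') :
    dgInterval l k ∩ dgInterval l k' = ∅ := by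
  have hl : (0:ℝ) < l := by exact_mod_cast k.pos
  have key : ∀ a b : Fin l, (a:ℕ) < (b:ℕ) → dgInterval l a ∩ dgInterval l b = ∅ := by
    intro a b hab
    apply Set.eq_empty_iff_forall_notMem.mpr
    rintro x ⟨⟨_, h2⟩, ⟨h3, _⟩⟩
    have hcast : ((a:ℕ):ℝ) + 1 ≤ ((b:ℕ):ℝ) := by exact_mod_cast hab
    have : ((a:ℝ) + 1) / l ≤ (b:ℝ) / l := by gcongr
    linarith
  rcases lt_or_gt_of_ne (fun hv => h (Fin.ext hv)) with hlt | hlt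
  · exact key _ _ hlt
  · rw [Set.inter_comm]; exact key _ _ hlt

lemma dgInterval_subset_Ico {l : ℕ} (k : Fin l) : dgInterval l k ⊆ Set.Ico (0:ℝ) 1 := by
  have hl : (0:ℝ) < l := by exact_mod_cast k.pos
  rintro x ⟨h1, h2⟩
  constructor
  · have : (0:ℝ) ≤ (k:ℝ) / l := by positivity
    linarith
  · have hk1 : ((k:ℕ):ℝ) + 1 ≤ (l:ℝ) := by exact_mod_cast k.isLt
    have : ((k:ℝ) + 1) / l ≤ (l:ℝ) / l := by gcongr
    rw [div_self hl.ne'] at this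
    linarith

lemma volume_inter_dg_ne_top {l : ℕ} (S : Set ℝ) (k : Fin l) :
    volume (S ∩ dgInterval l k) ≠ ⊤ := by
  refine ne_top_of_le_ne_top ?_ (measure_mono Set.inter_subset_right)
  simp [dgInterval, Real.volume_Ico]

section Values

variable {n m l : ℕ} (vM : Fin n → Fin m → ℝ) (vC : Fin n → Fin l → ℝ)

lemma valDiv_empty (i : Fin n) : valDiv vC i ∅ = 0 := by simp [valDiv]

lemma valDiv_nonneg (hbinC : ∀ i j, vC i j = 0 ∨ vC i j = 1) (i : Fin n) (S : Set ℝ) :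
    0 ≤ valDiv vC i S := by
  apply Finset.sum_nonneg
  intro k _
  rcases hbinC i k with h | h <;> simp [h, ENNReal.toReal_nonneg]

lemma valDiv_union (i : Fin n) {X S : Set ℝ} (hd : Disjoint X S) (hS : MeasurableSet S) :
    valDiv vC i (X ∪ S) = valDiv vC i X + valDiv vC i S := by
  unfold valDiv
  rw [← Finset.sum_add_distrib]
  refine Finset.sum_congr rfl fun k _ => ?_
  rw [← mul_add]
  congr 1
  rw [Set.union_inter_distrib_right,
    measure_union (hd.mono Set.inter_subset_left Set.inter_subset_left)
      (hS.inter (dgInterval_measurableSet l k)),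
    ENNReal.toReal_add (volume_inter_dg_ne_top _ _) (volume_inter_dg_ne_top _ _)]

lemma valDiv_diff (i : Fin n) {X S : Set ℝ} (hsub : S ⊆ X) (hS : MeasurableSet S) :
    valDiv vC i (X \ S) = valDiv vC i X - valDiv vC i S := by
  have hd : Disjoint (X \ S) S := Set.disjoint_left.mpr fun x hx => hx.2
  have := valDiv_union vC i hd hS
  rw [Set.diff_union_of_subset hsub] at this
  linarith

lemma valDiv_subset_interval (i : Fin n) {S : Set ℝ} {k : Fin l}
    (hsub : S ⊆ dgInterval l k) :
    valDiv vC i S = vC i k * (volume S).toReal := by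
  unfold valDiv
  rw [Finset.sum_eq_single k]
  · rw [Set.inter_eq_self_of_subset_left hsub]
  · intro k' _ hk'
    have : S ∩ dgInterval l k' = ∅ := by
      apply Set.eq_empty_of_subset_empty
      rw [← dgInterval_disjoint hk'.symm]
      exact fun x hx => ⟨hsub hx.1, hx.2⟩
    simp [this]
  · intro h; exact absurd (Finset.mem_univ k) h

lemma valInd_nonneg (hbinM : ∀ i g, vM i g = 0 ∨ vM i g = 1) (i : Fin n)
    (T : Finset (Fin m)) : 0 ≤ valInd vM i T := by
  apply Finset.sum_nonneg
  intro g _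
  rcases hbinM i g with h | h <;> simp [h]

lemma valInd_le_card (hbinM : ∀ i g, vM i g = 0 ∨ vM i g = 1) (i : Fin n)
    (T : Finset (Fin m)) : valInd vM i T ≤ (T.card : ℝ) := by
  calc valInd vM i T ≤ ∑ _g ∈ T, (1:ℝ) := by
        apply Finset.sum_le_sum
        intro g _
        rcases hbinM i g with h | h <;> simp [h]
    _ = (T.card : ℝ) := by simp

end Values

end WeakEFXMAux

namespace WeakEFXMAux

section Transfer

variable {n m l : ℕ}

lemma alloc_mem_ind_unique (A : Alloc n m) {i j : Fin n} {g : Fin m}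
    (hi : g ∈ A.ind i) (hj : g ∈ A.ind j) : i = j := by
  obtain ⟨o, _, hu⟩ := A.ind_partition g
  exact (hu i hi).trans (hu j hj).symm

lemma alloc_mem_piece_unique (A : Alloc n m) {i j : Fin n} {x : ℝ}
    (hi : x ∈ A.piece i) (hj : x ∈ A.piece j) : i = j := by
  by_contra hij
  exact Set.eq_empty_iff_forall_notMem.mp (A.piece_disjoint i j hij) x ⟨hi, hj⟩

/-- Transfer the indivisible goods `T ⊆ A.ind j` and the piece `S ⊆ A.piece j`
from agent `j` to agent `i`. -/
def transfer (A : Alloc n m) (i j : Fin n) (hij : i ≠ j) (T : Finset (Fin m))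
    (hT : T ⊆ A.ind j) (S : Set ℝ) (hSm : MeasurableSet S) (hSs : S ⊆ A.piece j) :
    Alloc n m where
  ind k := if k = i then A.ind i ∪ T else if k = j then A.ind j \ T else A.ind k
  piece k := if k = i then A.piece i ∪ S else if k = j then A.piece j \ S else A.piece k
  ind_partition := by
    intro g
    obtain ⟨o, ho, huniq⟩ := A.ind_partition g
    by_cases hgT : g ∈ T
    · have hoj : o = j := (huniq j (hT hgT)).symm
      refine ⟨i, by simp [hgT], ?_⟩
      intro k hk
      by_cases hki : k = i
      · exact hki
      by_cases hkj : k = j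
      · simp only [if_neg hki, if_pos hkj, Finset.mem_sdiff] at hk
        exact absurd hgT hk.2
      · simp only [if_neg hki, if_neg hkj] at hk
        exact absurd ((huniq k hk).trans hoj) hkj
    · refine ⟨o, ?_, ?_⟩
      · by_cases hoi : o = i
        · simp only [if_pos hoi, Finset.mem_union]
          exact Or.inl (hoi ▸ ho)
        by_cases hoj : o = j
        · simp only [if_neg hoi, if_pos hoj, Finset.mem_sdiff]
          exact ⟨hoj ▸ ho, hgT⟩
        · simp only [if_neg hoi, if_neg hoj]; exact ho
      · intro k hk
        by_cases hki : k = i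
        · simp only [if_pos hki, Finset.mem_union] at hk
          rcases hk with hk | hk
          · exact hki.trans (huniq i (hki ▸ hk))
          · exact absurd hk hgT
        by_cases hkj : k = j
        · simp only [if_neg hki, if_pos hkj, Finset.mem_sdiff] at hk
          exact hkj.trans (huniq j (hkj ▸ hk.1))
        · simp only [if_neg hki, if_neg hkj] at hk
          exact huniq k hk
  piece_measurable := by
    intro k
    by_cases hki : k = i
    · simp only [if_pos hki]; exact (A.piece_measurable i).union hSm
    by_cases hkj : k = j
    · simp only [if_neg hki, if_pos hkj]; exact (A.piece_measurable j).diff hSm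
    · simp only [if_neg hki, if_neg hkj]; exact A.piece_measurable k
  piece_disjoint := by
    have key : ∀ (x : ℝ) (a : Fin n),
        x ∈ (if a = i then A.piece i ∪ S else if a = j then A.piece j \ S else A.piece a) →
        (x ∈ A.piece a ∧ (a = j → x ∉ S)) ∨ (a = i ∧ x ∈ S) := by
      intro x a hx
      by_cases hai : a = i
      · rw [if_pos hai] at hx
        rcases hx with hx | hx
        · exact Or.inl ⟨hai ▸ hx, fun haj => absurd (hai.symm.trans haj) hij⟩
        · exact Or.inr ⟨hai, hx⟩
      by_cases haj : a = j
      · rw [if_neg hai, if_pos haj] at hx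
        exact Or.inl ⟨haj ▸ hx.1, fun _ => hx.2⟩
      · rw [if_neg hai, if_neg haj] at hx
        exact Or.inl ⟨hx, fun haj' => absurd haj' haj⟩
    intro a b hab
    apply Set.eq_empty_iff_forall_notMem.mpr
    rintro x ⟨hxa, hxb⟩
    rcases key x a hxa with ⟨hpa, hna⟩ | ⟨hai, hxS⟩ <;>
      rcases key x b hxb with ⟨hpb, hnb⟩ | ⟨hbi, hxS'⟩
    · exact hab (alloc_mem_piece_unique A hpa hpb)
    · exact (hna (alloc_mem_piece_unique A hpa (hSs hxS'))) hxS'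
    · exact (hnb (alloc_mem_piece_unique A hpb (hSs hxS))) hxS
    · exact hab (hai.trans hbi.symm)
  piece_cover := by
    apply Set.Subset.antisymm
    · intro x hx
      rw [← A.piece_cover]
      simp only [Set.mem_iUnion] at hx ⊢
      obtain ⟨a, hxa⟩ := hx
      by_cases hai : a = i
      · rw [if_pos hai] at hxa
        rcases hxa with hx | hx
        · exact ⟨i, hx⟩
        · exact ⟨j, hSs hx⟩
      by_cases haj : a = j
      · rw [if_neg hai, if_pos haj] at hxa
        exact ⟨j, haj ▸ hxa.1⟩
      · rw [if_neg hai, if_neg haj] at hxa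
        exact ⟨a, hxa⟩
    · intro x hx
      rw [← A.piece_cover] at hx
      simp only [Set.mem_iUnion] at hx ⊢
      obtain ⟨a, hxa⟩ := hx
      by_cases hai : a = i
      · exact ⟨i, by rw [if_pos rfl]; exact Or.inl (hai ▸ hxa)⟩
      by_cases haj : a = j
      · by_cases hxS : x ∈ S
        · exact ⟨i, by rw [if_pos rfl]; exact Or.inr hxS⟩
        · exact ⟨j, by rw [if_neg hij.symm, if_pos rfl]; exact ⟨haj ▸ hxa, hxS⟩⟩
      · exact ⟨a, by rw [if_neg hai, if_neg haj]; exact hxa⟩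

variable (vM : Fin n → Fin m → ℝ) (vC : Fin n → Fin l → ℝ)

lemma util_transfer_i (A : Alloc n m) (i j : Fin n) (hij : i ≠ j) (T : Finset (Fin m))
    (hT : T ⊆ A.ind j) (S : Set ℝ) (hSm : MeasurableSet S) (hSs : S ⊆ A.piece j) :
    util vM vC (transfer A i j hij T hT S hSm hSs) i
      = util vM vC A i + valInd vM i T + valDiv vC i S := by
  have hTd : Disjoint (A.ind i) T := by
    rw [Finset.disjoint_left]
    intro g hgi hgT
    exact hij (alloc_mem_ind_unique A hgi (hT hgT))
  have hSd : Disjoint (A.piece i) S := by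
    refine Set.disjoint_left.mpr fun x hxi hxS => ?_
    exact hij (alloc_mem_piece_unique A hxi (hSs hxS))
  show valInd vM i (if i = i then A.ind i ∪ T else _) +
      valDiv vC i (if i = i then A.piece i ∪ S else _) = _
  rw [if_pos rfl, if_pos rfl]
  unfold valInd
  rw [Finset.sum_union hTd, valDiv_union vC i hSd hSm]
  show _ = (valInd vM i (A.ind i) + valDiv vC i (A.piece i)) + valInd vM i T + valDiv vC i S
  unfold valInd
  ring

lemma util_transfer_j (A : Alloc n m) (i j : Fin n) (hij : i ≠ j) (T : Finset (Fin m))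
    (hT : T ⊆ A.ind j) (S : Set ℝ) (hSm : MeasurableSet S) (hSs : S ⊆ A.piece j) :
    util vM vC (transfer A i j hij T hT S hSm hSs) j
      = util vM vC A j - valInd vM j T - valDiv vC j S := by
  show valInd vM j (if j = i then _ else if j = j then A.ind j \ T else _) +
      valDiv vC j (if j = i then _ else if j = j then A.piece j \ S else _) = _
  rw [if_neg hij.symm, if_neg hij.symm, if_pos rfl, if_pos rfl]
  unfold valInd
  rw [Finset.sum_sdiff_eq_sub hT, valDiv_diff vC j hSs hSm]
  show _ = (valInd vM j (A.ind j) + valDiv vC j (A.piece j)) - valInd vM j T - valDiv vC j S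
  unfold valInd
  ring

lemma util_transfer_other (A : Alloc n m) (i j : Fin n) (hij : i ≠ j) (T : Finset (Fin m))
    (hT : T ⊆ A.ind j) (S : Set ℝ) (hSm : MeasurableSet S) (hSs : S ⊆ A.piece j)
    (k : Fin n) (hki : k ≠ i) (hkj : k ≠ j) :
    util vM vC (transfer A i j hij T hT S hSm hSs) k = util vM vC A k := by
  show valInd vM k (if k = i then _ else if k = j then _ else A.ind k) +
      valDiv vC k (if k = i then _ else if k = j then _ else A.piece k) = _
  rw [if_neg hki, if_neg hki, if_neg hkj, if_neg hkj]
  rfl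

lemma sum_shift {f g : Fin n → ℝ} (i j : Fin n) (hij : i ≠ j)
    (h : ∀ k, k ≠ i → k ≠ j → g k = f k) :
    ∑ k, g k = ∑ k, f k + (g i - f i) + (g j - f j) := by
  have h1 : ∑ k, (g k - f k) = ∑ k ∈ ({i, j} : Finset (Fin n)), (g k - f k) := by
    refine (Finset.sum_subset (Finset.subset_univ _) ?_).symm
    intro k _ hk
    simp only [Finset.mem_insert, Finset.mem_singleton] at hk
    push_neg at hk
    rw [h k hk.1 hk.2, sub_self]
  rw [Finset.sum_pair hij] at h1
  have h2 : ∑ k, (g k - f k) = ∑ k, g k - ∑ k, f k := Finset.sum_sub_distrib g f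
  linarith

lemma sum_util_transfer (A : Alloc n m) (i j : Fin n) (hij : i ≠ j) (T : Finset (Fin m))
    (hT : T ⊆ A.ind j) (S : Set ℝ) (hSm : MeasurableSet S) (hSs : S ⊆ A.piece j) :
    ∑ k, util vM vC (transfer A i j hij T hT S hSm hSs) k
      = ∑ k, util vM vC A k + (valInd vM i T + valDiv vC i S)
          - (valInd vM j T + valDiv vC j S) := by
  have := sum_shift i j hij
    (f := util vM vC A) (g := util vM vC (transfer A i j hij T hT S hSm hSs))
    (fun k hki hkj => util_transfer_other vM vC A i j hij T hT S hSm hSs k hki hkj)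
  rw [this, util_transfer_i vM vC A i j hij T hT S hSm hSs,
    util_transfer_j vM vC A i j hij T hT S hSm hSs]
  ring

end Transfer

end WeakEFXMAux

namespace WeakEFXMAux

lemma phi_lt {n : ℕ} (Φ : (Fin n → ℝ) → ℝ)
    (hsym : ∀ (σ : Equiv.Perm (Fin n)) (z : Fin n → ℝ), Φ (z ∘ σ) = Φ z)
    (hconv : ∀ z w : Fin n → ℝ, z ≠ w → ∀ t : ℝ, 0 < t → t < 1 →
      Φ (fun i => t * z i + (1 - t) * w i) < t * Φ z + (1 - t) * Φ w)
    (x z : Fin n → ℝ) (i j : Fin n) (hij : i ≠ j) (d : ℝ) (hd : 0 < d)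
    (hgap : x i + d < x j)
    (hzi : z i = x i + d) (hzj : z j = x j - d)
    (hz : ∀ k, k ≠ i → k ≠ j → z k = x k) :
    Φ z < Φ x := by
  set y : Fin n → ℝ := x ∘ (Equiv.swap i j) with hy
  have hyi : y i = x j := by simp [hy, Equiv.swap_apply_left]
  have hyj : y j = x i := by simp [hy, Equiv.swap_apply_right]
  have hyk : ∀ k, k ≠ i → k ≠ j → y k = x k := fun k h1 h2 => by
    simp [hy, Equiv.swap_apply_of_ne_of_ne h1 h2]
  have hΦy : Φ y = Φ x := hsym (Equiv.swap i j) x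
  have hc : 0 < x j - x i := by linarith
  set t : ℝ := 1 - d / (x j - x i) with ht
  have htd : d / (x j - x i) < 1 := (div_lt_one hc).mpr (by linarith)
  have htd0 : 0 < d / (x j - x i) := div_pos hd hc
  have ht0 : 0 < t := by rw [ht]; linarith
  have ht1 : t < 1 := by rw [ht]; linarith
  have hxy : x ≠ y := by
    intro h
    have := congrFun h i
    rw [hyi] at this
    linarith
  have hzz : z = fun k => t * x k + (1 - t) * y k := by
    funext k
    by_cases hki : k = i
    · subst hki
      rw [hzi, hyi]
      have h1 : t * x k + (1 - t) * x j = x k + (d / (x j - x k)) * (x j - x k) := by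
        rw [ht]; ring
      rw [h1, div_mul_cancel₀ _ hc.ne']
    by_cases hkj : k = j
    · subst hkj
      rw [hzj, hyj]
      have h1 : t * x k + (1 - t) * x i = x k - (d / (x k - x i)) * (x k - x i) := by
        rw [ht]; ring
      rw [h1, div_mul_cancel₀ _ hc.ne']
    · rw [hz k hki hkj, hyk k hki hkj]; ring
  calc Φ z = Φ (fun k => t * x k + (1 - t) * y k) := by rw [hzz]
    _ < t * Φ x + (1 - t) * Φ y := hconv x y hxy t ht0 ht1
    _ = Φ x := by rw [hΦy]; ring

lemma exists_piece_of_measure {P : Set ℝ} (hP : MeasurableSet P)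
    (hPsub : P ⊆ Set.Ico (0:ℝ) 1) {r : ℝ} (hr0 : 0 ≤ r)
    (hr1 : r ≤ (volume P).toReal) :
    ∃ S : Set ℝ, S ⊆ P ∧ MeasurableSet S ∧ (volume S).toReal = r := by
  have hfin : volume P ≠ ⊤ := by
    refine ne_top_of_le_ne_top ?_ (measure_mono hPsub)
    simp [Real.volume_Ico]
  set f : ℝ → ℝ := fun a => (volume (P ∩ Set.Iio a)).toReal with hf
  have hfin' : ∀ a, volume (P ∩ Set.Iio a) ≠ ⊤ := fun a =>
    ne_top_of_le_ne_top hfin (measure_mono Set.inter_subset_left)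
  have hlip : ∀ a b : ℝ, a ≤ b → f b - f a ≤ b - a ∧ 0 ≤ f b - f a := by
    intro a b hab
    have hsplit : P ∩ Set.Iio b = (P ∩ Set.Iio a) ∪ (P ∩ Set.Ico a b) := by
      rw [← Set.inter_union_distrib_left]
      congr 1
      ext x
      simp only [Set.mem_Iio, Set.mem_union, Set.mem_Ico]
      constructor
      · intro h
        by_cases hxa : x < a
        · exact Or.inl hxa
        · exact Or.inr ⟨le_of_not_gt hxa, h⟩
      · rintro (h | ⟨_, h⟩)
        · exact lt_of_lt_of_le h hab
        · exact h
    have hdisj : Disjoint (P ∩ Set.Iio a) (P ∩ Set.Ico a b) := by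
      apply Set.disjoint_left.mpr
      rintro x ⟨_, hx1⟩ ⟨_, hx2, _⟩
      exact absurd hx1 (not_lt.mpr hx2)
    have hfin2 : volume (P ∩ Set.Ico a b) ≠ ⊤ :=
      ne_top_of_le_ne_top hfin (measure_mono Set.inter_subset_left)
    have heq : f b = f a + (volume (P ∩ Set.Ico a b)).toReal := by
      rw [hf]
      simp only
      rw [hsplit, measure_union hdisj (hP.inter measurableSet_Ico),
        ENNReal.toReal_add (hfin' a) hfin2]
    have hle : (volume (P ∩ Set.Ico a b)).toReal ≤ b - a := by
      calc (volume (P ∩ Set.Ico a b)).toReal ≤ (volume (Set.Ico a b)).toReal :=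
            ENNReal.toReal_mono (by simp [Real.volume_Ico])
              (measure_mono Set.inter_subset_right)
        _ = b - a := by rw [Real.volume_Ico, ENNReal.toReal_ofReal (by linarith)]
    refine ⟨by rw [heq]; linarith, ?_⟩
    have h0 : (0:ℝ) ≤ (volume (P ∩ Set.Ico a b)).toReal := ENNReal.toReal_nonneg
    rw [heq]; linarith
  have hcont : Continuous f := by
    refine LipschitzWith.continuous (K := 1) (LipschitzWith.of_dist_le_mul fun a b => ?_)
    rw [Real.dist_eq, Real.dist_eq, NNReal.coe_one, one_mul]
    rcases le_total a b with h | h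
    · obtain ⟨h1, h2⟩ := hlip a b h
      rw [abs_sub_comm (f a) (f b), abs_sub_comm a b,
        abs_of_nonneg h2, abs_of_nonneg (sub_nonneg.mpr h)]
      exact h1
    · obtain ⟨h1, h2⟩ := hlip b a h
      rw [abs_of_nonneg h2, abs_of_nonneg (sub_nonneg.mpr h)]
      exact h1
  have hf0 : f 0 = 0 := by
    have h0 : P ∩ Set.Iio 0 = ∅ := by
      apply Set.eq_empty_iff_forall_notMem.mpr
      rintro x ⟨hxP, hx0⟩
      exact absurd hx0 (not_lt.mpr (hPsub hxP).1)
    simp [hf, h0]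
  have hf1 : f 1 = (volume P).toReal := by
    have h1 : P ∩ Set.Iio 1 = P :=
      Set.inter_eq_self_of_subset_left (fun x hx => (hPsub hx).2)
    simp [hf, h1]
  have hmem : r ∈ Set.Icc (f 0) (f 1) := by
    rw [hf0, hf1]; exact ⟨hr0, hr1⟩
  obtain ⟨a, _, ha⟩ := intermediate_value_Icc (by norm_num : (0:ℝ) ≤ 1)
    hcont.continuousOn hmem
  exact ⟨P ∩ Set.Iio a, Set.inter_subset_left, hP.inter measurableSet_Iio, ha⟩

end WeakEFXMAux

namespace WeakEFXMAux

section Opt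

variable {n m l : ℕ} (vM : Fin n → Fin m → ℝ) (vC : Fin n → Fin l → ℝ)

lemma opt_ind {A : Alloc n m} (hopt : UtilOpt vM vC A) {j : Fin n} {g : Fin m}
    (hg : g ∈ A.ind j) (k : Fin n) : vM k g ≤ vM j g := by
  by_contra hle
  push_neg at hle
  have hkj : k ≠ j := by rintro rfl; exact lt_irrefl _ hle
  have hle2 := hopt (transfer A k j hkj {g} (Finset.singleton_subset_iff.mpr hg) ∅
    MeasurableSet.empty (Set.empty_subset _))
  rw [sum_util_transfer] at hle2
  have hv1 : valInd vM k {g} = vM k g := by simp [valInd]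
  have hv2 : valInd vM j {g} = vM j g := by simp [valInd]
  rw [hv1, hv2, valDiv_empty vC k, valDiv_empty vC j] at hle2
  linarith

lemma opt_div {A : Alloc n m} (hopt : UtilOpt vM vC A) {j : Fin n} {k : Fin l}
    (hvol : volume (A.piece j ∩ dgInterval l k) ≠ 0) (i : Fin n) : vC i k ≤ vC j k := by
  by_contra hle
  push_neg at hle
  have hij : i ≠ j := by rintro rfl; exact lt_irrefl _ hle
  have hSm : MeasurableSet (A.piece j ∩ dgInterval l k) :=
    (A.piece_measurable j).inter (dgInterval_measurableSet l k)
  have hle2 := hopt (transfer A i j hij ∅ (Finset.empty_subset _) _ hSm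
    Set.inter_subset_left)
  rw [sum_util_transfer] at hle2
  have hsub : A.piece j ∩ dgInterval l k ⊆ dgInterval l k := Set.inter_subset_right
  rw [valDiv_subset_interval vC i hsub, valDiv_subset_interval vC j hsub] at hle2
  have hi0 : valInd vM i (∅ : Finset (Fin m)) = 0 := by simp [valInd]
  have hj0 : valInd vM j (∅ : Finset (Fin m)) = 0 := by simp [valInd]
  rw [hi0, hj0] at hle2
  have hpos : 0 < (volume (A.piece j ∩ dgInterval l k)).toReal :=
    ENNReal.toReal_pos hvol (volume_inter_dg_ne_top _ _)
  nlinarith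

lemma valOn_le_util {A : Alloc n m} (hopt : UtilOpt vM vC A) (i j : Fin n) :
    valOn vM vC A i j ≤ util vM vC A j := by
  have h1 : valInd vM i (A.ind j) ≤ valInd vM j (A.ind j) :=
    Finset.sum_le_sum (fun g hg => opt_ind vM vC hopt hg i)
  have h2 : valDiv vC i (A.piece j) ≤ valDiv vC j (A.piece j) := by
    apply Finset.sum_le_sum
    intro k _
    rcases eq_or_ne (volume (A.piece j ∩ dgInterval l k)) 0 with h0 | h0
    · simp [h0]
    · exact mul_le_mul_of_nonneg_right (opt_div vM vC hopt h0 i) ENNReal.toReal_nonneg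
  show valInd vM i (A.ind j) + valDiv vC i (A.piece j) ≤
    valInd vM j (A.ind j) + valDiv vC j (A.piece j)
  linarith

end Opt

end WeakEFXMAux

open WeakEFXMAux

/-- for binary linear valuations and a symmetric strictly convex `Φ`,
every `Φ`-fair allocation (not necessarily satisfying condition (*)) satisfies the
weaker variant of EFXM: for all agents `i, j`, if `u_i(C_j) = 0` then
`u_i(A_i) ≥ u_i(A_j)` or `u_i(A_i) ≥ u_i(A_j \ {g})` for every indivisible good
`g ∈ A_j`; otherwise `u_i(A_i) ≥ u_i(A_j)`. -/
theorem phiFair_is_weak_EFXM {n m l : ℕ} (hl : 0 < l)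
    (vM : Fin n → Fin m → ℝ) (vC : Fin n → Fin l → ℝ)
    (hbinM : ∀ i g, vM i g = 0 ∨ vM i g = 1)
    (hbinC : ∀ i j, vC i j = 0 ∨ vC i j = 1)
    (hagent : ∀ i : Fin n, (∃ g, 0 < vM i g) ∨ ∃ j, 0 < vC i j)
    (hgoodM : ∀ g : Fin m, ∃ i, 0 < vM i g)
    (hgoodC : ∀ j : Fin l, ∃ i, 0 < vC i j)
    (Φ : (Fin n → ℝ) → ℝ)
    (hsym : ∀ (σ : Equiv.Perm (Fin n)) (z : Fin n → ℝ), Φ (z ∘ σ) = Φ z)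
    (hconv : ∀ z w : Fin n → ℝ, z ≠ w → ∀ t : ℝ, 0 < t → t < 1 →
      Φ (fun i => t * z i + (1 - t) * w i) < t * Φ z + (1 - t) * Φ w)
    (A : Alloc n m)
    (hfair : PhiFair vM vC Φ A) :
    ∀ i j : Fin n,
      (valDiv vC i (A.piece j) = 0 →
        (valOn vM vC A i j ≤ util vM vC A i ∨
          ∀ g ∈ A.ind j,
            valInd vM i (A.ind j \ {g}) + valDiv vC i (A.piece j) ≤ util vM vC A i)) ∧
      (valDiv vC i (A.piece j) ≠ 0 → valOn vM vC A i j ≤ util vM vC A i) := by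
  intro i j
  have hopt := hfair.1
  have hutil_nonneg : ∀ a : Fin n, 0 ≤ util vM vC A a := by
    intro a
    show 0 ≤ valInd vM a (A.ind a) + valDiv vC a (A.piece a)
    have := valInd_nonneg vM hbinM a (A.ind a)
    have := valDiv_nonneg vC hbinC a (A.piece a)
    linarith
  by_cases hij : i = j
  · subst hij
    exact ⟨fun _ => Or.inl (le_of_eq rfl), fun _ => le_of_eq rfl⟩
  have hCle : valOn vM vC A i j ≤ util vM vC A j := valOn_le_util vM vC hopt i j
  constructor
  · -- divisible value zero case
    intro hdiv0
    right
    intro g₀ hg₀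
    by_contra hcon
    push_neg at hcon
    rw [hdiv0, add_zero] at hcon
    have hjval : ∀ g ∈ A.ind j, vM j g = 1 := by
      intro g hg
      obtain ⟨a, ha⟩ := hgoodM g
      have ha1 : vM a g = 1 := by
        rcases hbinM a g with h | h
        · rw [h] at ha; linarith
        · exact h
      have hle := opt_ind vM vC hopt hg a
      rw [ha1] at hle
      rcases hbinM j g with h | h
      · rw [h] at hle; linarith
      · exact h
    have hcard : valInd vM j (A.ind j) = ((A.ind j).card : ℝ) := by
      unfold valInd
      rw [Finset.sum_congr rfl hjval]
      simp
    have hsub : ({g₀} : Finset (Fin m)) ⊆ A.ind j := Finset.singleton_subset_iff.mpr hg₀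
    have hcard2 : ((A.ind j \ {g₀}).card : ℝ) + 1 = ((A.ind j).card : ℝ) := by
      have h := Finset.card_sdiff_add_card_eq_card hsub
      rw [Finset.card_singleton] at h
      exact_mod_cast h
    have hK : valInd vM i (A.ind j \ {g₀}) ≤ ((A.ind j \ {g₀}).card : ℝ) :=
      valInd_le_card vM hbinM i _
    have hgap : util vM vC A i + 1 < util vM vC A j := by
      have hdivj : 0 ≤ valDiv vC j (A.piece j) := valDiv_nonneg vC hbinC j _
      have huj : util vM vC A j = valInd vM j (A.ind j) + valDiv vC j (A.piece j) := rfl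
      rw [huj, hcard]
      linarith
    have hexg : ∃ g ∈ A.ind j \ {g₀}, vM i g = 1 := by
      by_contra hall
      push_neg at hall
      have hz : valInd vM i (A.ind j \ {g₀}) = 0 := by
        unfold valInd
        apply Finset.sum_eq_zero
        intro g hg
        rcases hbinM i g with h | h
        · exact h
        · exact absurd h (hall g hg)
      have := hutil_nonneg i
      linarith
    obtain ⟨g, hgmem, hgi1⟩ := hexg
    have hgj : g ∈ A.ind j := (Finset.mem_sdiff.mp hgmem).1
    have hgj1 : vM j g = 1 := hjval g hgj
    set A' := transfer A i j hij {g} (Finset.singleton_subset_iff.mpr hgj) ∅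
      MeasurableSet.empty (Set.empty_subset _) with hA'
    have hval1 : valInd vM i {g} = vM i g := by simp [valInd]
    have hval2 : valInd vM j {g} = vM j g := by simp [valInd]
    have hsum : ∑ k, util vM vC A' k = ∑ k, util vM vC A k := by
      rw [hA', sum_util_transfer, hval1, hval2, valDiv_empty vC i, valDiv_empty vC j,
        hgi1, hgj1]
      ring
    have hopt' : UtilOpt vM vC A' := fun A'' => le_of_le_of_eq (hopt A'') hsum.symm
    have hzi : util vM vC A' i = util vM vC A i + 1 := by
      rw [hA', util_transfer_i, hval1, valDiv_empty vC i, hgi1]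
      ring
    have hzj : util vM vC A' j = util vM vC A j - 1 := by
      rw [hA', util_transfer_j, hval2, valDiv_empty vC j, hgj1]
      ring
    have hzk : ∀ k, k ≠ i → k ≠ j → util vM vC A' k = util vM vC A k := by
      intro k h1 h2
      rw [hA']
      exact util_transfer_other vM vC A i j hij _ _ _ _ _ k h1 h2
    have hlt := phi_lt Φ hsym hconv (util vM vC A) (util vM vC A') i j hij 1 one_pos
      hgap hzi hzj hzk
    exact absurd (hfair.2 A' hopt') (not_le.mpr hlt)
  · -- divisible value nonzero case
    intro hdivne
    by_contra hcon
    push_neg at hcon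
    obtain ⟨k, hk⟩ : ∃ k, vC i k * (volume (A.piece j ∩ dgInterval l k)).toReal ≠ 0 := by
      by_contra hall
      push_neg at hall
      exact hdivne (by unfold valDiv; exact Finset.sum_eq_zero fun k _ => hall k)
    have hvCik : vC i k = 1 := by
      rcases hbinC i k with h | h
      · rw [h, zero_mul] at hk; exact absurd rfl hk
      · exact h
    have htR : (volume (A.piece j ∩ dgInterval l k)).toReal ≠ 0 := by
      intro h; rw [h, mul_zero] at hk; exact hk rfl
    have hvol : volume (A.piece j ∩ dgInterval l k) ≠ 0 := fun h => htR (by rw [h]; simp)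
    have hvCjk : vC j k = 1 := by
      have hle := opt_div vM vC hopt hvol i
      rw [hvCik] at hle
      rcases hbinC j k with h | h
      · rw [h] at hle; linarith
      · exact h
    have hgap0 : util vM vC A i < util vM vC A j := lt_of_lt_of_le hcon hCle
    have htpos : 0 < (volume (A.piece j ∩ dgInterval l k)).toReal :=
      lt_of_le_of_ne ENNReal.toReal_nonneg (Ne.symm htR)
    set c := util vM vC A j - util vM vC A i with hc
    have hcpos : 0 < c := by rw [hc]; linarith
    set r := min ((volume (A.piece j ∩ dgInterval l k)).toReal) (c / 2) with hr
    have hrpos : 0 < r := lt_min htpos (by linarith)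
    have hrle : r ≤ (volume (A.piece j ∩ dgInterval l k)).toReal := min_le_left _ _
    have hPm : MeasurableSet (A.piece j ∩ dgInterval l k) :=
      (A.piece_measurable j).inter (dgInterval_measurableSet l k)
    have hPsub : A.piece j ∩ dgInterval l k ⊆ Set.Ico (0:ℝ) 1 :=
      subset_trans Set.inter_subset_right (dgInterval_subset_Ico k)
    obtain ⟨S, hSsub, hSm, hSvol⟩ := exists_piece_of_measure hPm hPsub hrpos.le hrle
    have hSpj : S ⊆ A.piece j := subset_trans hSsub Set.inter_subset_left
    have hSk : S ⊆ dgInterval l k := subset_trans hSsub Set.inter_subset_right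
    have hvi : valDiv vC i S = r := by
      rw [valDiv_subset_interval vC i hSk, hSvol, hvCik, one_mul]
    have hvj : valDiv vC j S = r := by
      rw [valDiv_subset_interval vC j hSk, hSvol, hvCjk, one_mul]
    have hind0i : valInd vM i (∅ : Finset (Fin m)) = 0 := by simp [valInd]
    have hind0j : valInd vM j (∅ : Finset (Fin m)) = 0 := by simp [valInd]
    set A' := transfer A i j hij ∅ (Finset.empty_subset _) S hSm hSpj with hA'
    have hsum : ∑ k', util vM vC A' k' = ∑ k', util vM vC A k' := by
      rw [hA', sum_util_transfer, hind0i, hind0j, hvi, hvj]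
      ring
    have hopt' : UtilOpt vM vC A' := fun A'' => le_of_le_of_eq (hopt A'') hsum.symm
    have hzi : util vM vC A' i = util vM vC A i + r := by
      rw [hA', util_transfer_i, hind0i, hvi]
      ring
    have hzj : util vM vC A' j = util vM vC A j - r := by
      rw [hA', util_transfer_j, hind0j, hvj]
      ring
    have hzk : ∀ k', k' ≠ i → k' ≠ j → util vM vC A' k' = util vM vC A k' := by
      intro k' h1 h2
      rw [hA']
      exact util_transfer_other vM vC A i j hij _ _ _ _ _ k' h1 h2
    have hgap : util vM vC A i + r < util vM vC A j := by
      have hrc : r ≤ c / 2 := min_le_right _ _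
      rw [hc] at hrc
      linarith
    have hlt := phi_lt Φ hsym hconv (util vM vC A) (util vM vC A') i j hij r hrpos
      hgap hzi hzj hzk
    exact absurd (hfair.2 A' hopt') (not_le.mpr hlt)
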